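/- arXiv:0804.1460 — 3 statements merged into one kernel-verified Lean document; each statement's English description precedes it below -/
import Mathlib

section
/- For a monad (R, m, i) on a category A, the multiplication m : RR → R has a natural section m̂ : R → RR satisfying Rm ∘ m̂R = m̂ ∘ m = mR ∘ Rm̂ if and only if the forgetful functor from the Eilenberg–Moore category of R-modules to A is separable. -/
open CategoryTheory

/-- A functor `F : B ⥤ A` is separable if the natural transformation of Hom-bifunctors
`f ↦ F f` is a split natural monomorphism, i.e. it has a natural retraction. -/
def SeparableFunctor {B A : Type*} [Category B] [Category A] (F : B ⥤ A) : Prop :=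
  ∃ ζ : ∀ X Y : B, (F.obj X ⟶ F.obj Y) → (X ⟶ Y),
    (∀ (X Y : B) (f : X ⟶ Y), ζ X Y (F.map f) = f) ∧
    ∀ (X' X Y Y' : B) (g : X' ⟶ X) (h : Y ⟶ Y') (p : F.obj X ⟶ F.obj Y),
      ζ X' Y' (F.map g ≫ p ≫ F.map h) = g ≫ ζ X Y p ≫ h

/-- For a monad `(R, m, i)` on a category `A`, the multiplication `m` has a natural section
`m̂ : R ⟶ RR` satisfying `Rm ∘ m̂R = m̂ ∘ m = mR ∘ Rm̂` if and only if the forgetful functor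
from Eilenberg–Moore `R`-modules to `A` is separable. -/
theorem separable_monad_iff_forget_separable {A : Type*} [Category A] (R : Monad A) :
    (∃ mhat : (R : A ⥤ A) ⟶ ((R : A ⥤ A) ⋙ (R : A ⥤ A)),
      (∀ X : A, mhat.app X ≫ R.μ.app X = 𝟙 ((R : A ⥤ A).obj X)) ∧
      (∀ X : A, mhat.app ((R : A ⥤ A).obj X) ≫ (R : A ⥤ A).map (R.μ.app X) =
        R.μ.app X ≫ mhat.app X) ∧
      (∀ X : A, R.μ.app X ≫ mhat.app X =
        (R : A ⥤ A).map (mhat.app X) ≫ R.μ.app ((R : A ⥤ A).obj X)))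
    ↔ SeparableFunctor R.forget := by
  constructor
  · rintro ⟨mhat, h1, h2, h3⟩
    have ηnat : ∀ {X Y : A} (f : X ⟶ Y),
        f ≫ R.η.app Y = R.η.app X ≫ (R : A ⥤ A).map f := by
      intro X Y f; exact R.η.naturality f
    have μnat : ∀ {X Y : A} (f : X ⟶ Y),
        (R : A ⥤ A).map ((R : A ⥤ A).map f) ≫ R.μ.app Y =
          R.μ.app X ≫ (R : A ⥤ A).map f := by
      intro X Y f; simpa using R.μ.naturality f
    have mnat : ∀ {X Y : A} (f : X ⟶ Y),
        (R : A ⥤ A).map f ≫ mhat.app Y =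
          mhat.app X ≫ (R : A ⥤ A).map ((R : A ⥤ A).map f) := by
      intro X Y f; exact mhat.naturality f
    -- the natural section of the counit
    set ν : ∀ M : R.Algebra, (M.A ⟶ (R : A ⥤ A).obj M.A) :=
      fun M => R.η.app M.A ≫ mhat.app M.A ≫ (R : A ⥤ A).map M.a with hν
    have L1 : ∀ M : R.Algebra, ν M ≫ M.a = 𝟙 M.A := by
      intro M
      simp only [hν, Category.assoc]
      rw [← Monad.Algebra.assoc, ← Category.assoc (mhat.app M.A), h1]
      simp [Monad.Algebra.unit]
    have L2 : ∀ M : R.Algebra,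
        (R : A ⥤ A).map (ν M) ≫ R.μ.app M.A = M.a ≫ ν M := by
      intro M
      have lhs : (R : A ⥤ A).map (ν M) ≫ R.μ.app M.A =
          mhat.app M.A ≫ (R : A ⥤ A).map M.a := by
        simp only [hν, Functor.map_comp, Category.assoc]
        rw [μnat M.a, ← Category.assoc ((R : A ⥤ A).map (mhat.app M.A)), ← h3,
          ← Category.assoc, ← Category.assoc, R.right_unit]
        simp
      have rhs : M.a ≫ ν M = mhat.app M.A ≫ (R : A ⥤ A).map M.a := by
        simp only [hν]
        rw [← Category.assoc, ηnat M.a, Category.assoc,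
          ← Category.assoc ((R : A ⥤ A).map M.a), mnat M.a, Category.assoc,
          ← Functor.map_comp, ← Monad.Algebra.assoc,
          Functor.map_comp, ← Category.assoc (mhat.app _), h2,
          ← Category.assoc, ← Category.assoc, R.left_unit]
        simp
      rw [lhs, rhs]
    have L3 : ∀ (M N : R.Algebra) (f : M ⟶ N),
        f.f ≫ ν N = ν M ≫ (R : A ⥤ A).map f.f := by
      intro M N f
      simp only [hν]
      rw [← Category.assoc, ηnat f.f, Category.assoc,
        ← Category.assoc ((R : A ⥤ A).map f.f), mnat f.f,
        Category.assoc (mhat.app M.A), ← Functor.map_comp, f.h,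
        Functor.map_comp]
      simp only [Category.assoc]
    refine ⟨fun M N (p : M.A ⟶ N.A) =>
      { f := ν M ≫ (R : A ⥤ A).map p ≫ N.a
        h := ?_ }, ?_, ?_⟩
    · simp only [Functor.map_comp, Category.assoc]
      rw [← Monad.Algebra.assoc,
        ← Category.assoc ((R : A ⥤ A).map ((R : A ⥤ A).map p)),
        show (R : A ⥤ A).map ((R : A ⥤ A).map p) ≫ R.μ.app N.A =
          R.μ.app M.A ≫ (R : A ⥤ A).map p from μnat p,
        ← Category.assoc, ← Category.assoc, ← Category.assoc, L2 M]
      simp only [Category.assoc]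
    · intro M N f
      ext
      show ν M ≫ (R : A ⥤ A).map f.f ≫ N.a = f.f
      rw [f.h, ← Category.assoc, L1 M, Category.id_comp]
    · intro X' X Y Y' g h (p : X.A ⟶ Y.A)
      ext
      show ν X' ≫ (R : A ⥤ A).map (g.f ≫ p ≫ h.f) ≫ Y'.a =
        g.f ≫ (ν X ≫ (R : A ⥤ A).map p ≫ Y.a) ≫ h.f
      simp only [Functor.map_comp, Category.assoc]
      rw [h.h, ← Category.assoc, ← L3 X' X g]
      simp only [Category.assoc]
  · intro hsep
    obtain ⟨ζ, hz1, hz2⟩ : ∃ ζ : ∀ X Y : R.Algebra, (X.A ⟶ Y.A) → (X ⟶ Y),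
        (∀ (X Y : R.Algebra) (f : X ⟶ Y), ζ X Y (R.forget.map f) = f) ∧
        ∀ (X' X Y Y' : R.Algebra) (g : X' ⟶ X) (h : Y ⟶ Y') (p : X.A ⟶ Y.A),
          ζ X' Y' (R.forget.map g ≫ p ≫ R.forget.map h) = g ≫ ζ X Y p ≫ h := hsep
    -- counit morphisms as algebra maps
    set eps : ∀ X : A, (R.free.obj ((R : A ⥤ A).obj X) ⟶ R.free.obj X) :=
      fun X => { f := R.μ.app X, h := R.assoc X } with heps
    set mh : ∀ X : A, (R.free.obj X ⟶ R.free.obj ((R : A ⥤ A).obj X)) :=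
      fun X => ζ (R.free.obj X) (R.free.obj ((R : A ⥤ A).obj X))
        (R.η.app ((R : A ⥤ A).obj X)) with hmh
    have key : ∀ (X Y : A) (g : R.free.obj X ⟶ R.free.obj Y),
        g ≫ mh Y = ζ (R.free.obj X) (R.free.obj ((R : A ⥤ A).obj Y))
          (g.f ≫ R.η.app ((R : A ⥤ A).obj Y)) := by
      intro X Y g
      rw [hmh]
      have := hz2 (R.free.obj X) (R.free.obj Y) (R.free.obj ((R : A ⥤ A).obj Y))
        (R.free.obj ((R : A ⥤ A).obj Y)) g (𝟙 _) (R.η.app ((R : A ⥤ A).obj Y))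
      simp only [CategoryTheory.Functor.map_id, Category.comp_id,
        Monad.forget_map, Monad.Algebra.id_f] at this
      rw [← this]
      congr 1
      exact congrArg (g.f ≫ ·) (Category.comp_id _)
    have key2 : ∀ (X Y : A) (h : R.free.obj ((R : A ⥤ A).obj X) ⟶ R.free.obj Y),
        mh X ≫ h = ζ (R.free.obj X) (R.free.obj Y)
          (R.η.app ((R : A ⥤ A).obj X) ≫ h.f) := by
      intro X Y h
      rw [hmh]
      have := hz2 (R.free.obj X) (R.free.obj X) (R.free.obj ((R : A ⥤ A).obj X))
        (R.free.obj Y) (𝟙 (R.free.obj X)) h (R.η.app ((R : A ⥤ A).obj X))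
      simp only [CategoryTheory.Functor.map_id, Category.id_comp,
        Monad.forget_map, Monad.Algebra.id_f] at this
      rw [← this]
      congr 1
      exact Category.id_comp _
    refine ⟨{ app := fun X => (mh X).f, naturality := ?_ }, ?_, ?_, ?_⟩
    · intro X Y f
      have h : R.free.map f ≫ mh Y = mh X ≫ R.free.map ((R : A ⥤ A).map f) := by
        rw [key, key2]
        congr 1
        exact R.η.naturality ((R : A ⥤ A).map f)
      have := congrArg Monad.Algebra.Hom.f h
      simp at this; exact this
    · intro X
      have h : mh X ≫ eps X = 𝟙 (R.free.obj X) := by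
        rw [key2]
        have hl : R.η.app ((R : A ⥤ A).obj X) ≫ (eps X).f =
            𝟙 ((R : A ⥤ A).obj X) := R.left_unit X
        erw [hl]
        have := hz1 (R.free.obj X) (R.free.obj X) (𝟙 _)
        simp at this; exact this
      have := congrArg Monad.Algebra.Hom.f h
      simp at this; exact this
    · intro X
      have h : mh ((R : A ⥤ A).obj X) ≫ R.free.map (R.μ.app X) =
          eps X ≫ mh X := by
        rw [key, key2]
        congr 1
        exact (R.η.naturality (R.μ.app X)).symm
      have := congrArg Monad.Algebra.Hom.f h
      simp at this; exact this
    · intro X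
      exact ((mh X).h).symm
end

section
/- Let L : A → A be a comonad with right adjoint monad R : A → A on a category A. Then the forgetful functor U^L : A^L → A from L-comodules is separable if and only if the forgetful functor U_R : A_R → A from R-modules is separable. Moreover, if these equivalent conditions hold, then every L-comodule is injective relative to U^L and every R-module is projective relative to U_R. -/
open CategoryTheory

/-- An object `M` of `B` is injective relative to a functor `U : B ⥤ A` if `Hom(f, M)` is
surjective for every morphism `f` of `B` such that `U f` is a split monomorphism. -/
def RelInjective {B A : Type*} [Category B] [Category A] (U : B ⥤ A) (M : B) : Prop :=
  ∀ {Y Z : B} (f : Y ⟶ Z),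
    (∃ r : U.obj Z ⟶ U.obj Y, U.map f ≫ r = 𝟙 (U.obj Y)) →
    ∀ g : Y ⟶ M, ∃ h : Z ⟶ M, f ≫ h = g

/-- An object `M` of `B` is projective relative to a functor `U : B ⥤ A` if `Hom(M, f)` is
surjective for every morphism `f` of `B` such that `U f` is a split epimorphism. -/
def RelProjective {B A : Type*} [Category B] [Category A] (U : B ⥤ A) (M : B) : Prop :=
  ∀ {Y Z : B} (f : Y ⟶ Z),
    (∃ s : U.obj Z ⟶ U.obj Y, s ≫ U.map f = 𝟙 (U.obj Z)) →
    ∀ g : M ⟶ Z, ∃ h : M ⟶ Y, h ≫ f = g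

namespace ForgetSepAux
open Functor

section Generalities

variable {B A : Type*} [Category B] [Category A] {U : B ⥤ A}

theorem relInjective_of_separable (h : SeparableFunctor U) (M : B) : RelInjective U M := by
  obtain ⟨ζ, hζ1, hζ2⟩ := h
  intro Y Z f hf g
  obtain ⟨r, hr⟩ := hf
  have h2 := hζ2 Y Z M M f (𝟙 M) (r ≫ U.map g)
  rw [U.map_id, Category.comp_id, Category.comp_id, ← Category.assoc, hr,
    Category.id_comp, hζ1] at h2
  exact ⟨ζ Z M (r ≫ U.map g), h2.symm⟩

theorem relProjective_of_separable (h : SeparableFunctor U) (M : B) : RelProjective U M := by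
  obtain ⟨ζ, hζ1, hζ2⟩ := h
  intro Y Z f hf g
  obtain ⟨s, hs⟩ := hf
  have h2 := hζ2 M M Y Z (𝟙 M) f (U.map g ≫ s)
  rw [U.map_id, Category.id_comp, Category.id_comp, Category.assoc,
    hs, Category.comp_id, hζ1] at h2
  exact ⟨ζ M Y (U.map g ≫ s), h2.symm⟩

end Generalities

section Mates

variable {A : Type*} [Category A] {G T : A ⥤ A} (adj : G ⊣ T)

theorem conj_whiskerRight_e (e : G ⋙ G ⟶ G) :
    conjugateEquiv (adj.comp adj) (adj.comp (adj.comp adj)) (whiskerRight e G) =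
      whiskerLeft T (conjugateEquiv adj (adj.comp adj) e) := by
  ext X
  simp only [conjugateEquiv_apply_app, Adjunction.comp_unit_app, Adjunction.comp_counit_app,
    Functor.comp_obj, Functor.comp_map, whiskerRight_app, whiskerLeft_app, Functor.map_comp,
    Category.assoc]
  slice_lhs 3 4 => rw [← T.map_comp, ← T.map_comp, adj.unit_naturality, T.map_comp, T.map_comp]
  slice_lhs 4 5 => rw [← T.map_comp, ← T.map_comp, adj.unit_naturality, T.map_comp, T.map_comp]
  slice_lhs 5 6 => rw [← T.map_comp, ← T.map_comp]
  simp

theorem conj_whiskerLeft_e (e : G ⋙ G ⟶ G) :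
    conjugateEquiv (adj.comp adj) (adj.comp (adj.comp adj)) (whiskerLeft G e) =
      whiskerRight (conjugateEquiv adj (adj.comp adj) e) T := by
  ext X
  simp only [conjugateEquiv_apply_app, Adjunction.comp_unit_app, Adjunction.comp_counit_app,
    Functor.comp_obj, Functor.comp_map, whiskerRight_app, whiskerLeft_app, Functor.map_comp,
    Category.assoc]
  slice_lhs 4 5 => rw [← T.map_comp, ← T.map_comp, ← T.map_comp, ← e.naturality]
  simp only [Functor.comp_map, Functor.map_comp, Category.assoc]
  slice_lhs 3 4 => rw [← T.map_comp, ← T.map_comp, adj.unit_naturality, T.map_comp, T.map_comp]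
  slice_lhs 2 3 => rw [← T.map_comp, adj.unit_naturality, T.map_comp]
  simp

theorem conj_whiskerRight_d (d : G ⟶ G ⋙ G) :
    conjugateEquiv (adj.comp (adj.comp adj)) (adj.comp adj) (whiskerRight d G) =
      whiskerLeft T (conjugateEquiv (adj.comp adj) adj d) := by
  ext X
  simp only [conjugateEquiv_apply_app, Adjunction.comp_unit_app, Adjunction.comp_counit_app,
    Functor.comp_obj, Functor.comp_map, whiskerRight_app, whiskerLeft_app, Functor.map_comp,
    Category.assoc]
  slice_lhs 2 3 => rw [← T.map_comp, adj.unit_naturality, T.map_comp]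
  slice_lhs 3 4 => rw [← T.map_comp, adj.unit_naturality, T.map_comp]
  slice_lhs 4 5 => rw [← T.map_comp, adj.unit_naturality, T.map_comp]
  slice_lhs 5 6 => rw [← T.map_comp]
  simp

theorem conj_whiskerLeft_d (d : G ⟶ G ⋙ G) :
    conjugateEquiv (adj.comp (adj.comp adj)) (adj.comp adj) (whiskerLeft G d) =
      whiskerRight (conjugateEquiv (adj.comp adj) adj d) T := by
  ext X
  simp only [conjugateEquiv_apply_app, Adjunction.comp_unit_app, Adjunction.comp_counit_app,
    Functor.comp_obj, Functor.comp_map, whiskerRight_app, whiskerLeft_app, Functor.map_comp,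
    Category.assoc]
  slice_lhs 3 4 =>
    rw [← T.map_comp, ← T.map_comp, ← Functor.comp_map G G, ← d.naturality, T.map_comp, T.map_comp]
  slice_lhs 2 3 => rw [← T.map_comp, adj.unit_naturality, T.map_comp]
  simp

end Mates

section Data

variable {A : Type*} [Category A]

/-- Comonad-side separability data: a natural retraction of the comultiplication which is
a map of bicomodules. -/
def CoData (G : Comonad A) : Prop :=
  ∃ e : (G : A ⥤ A) ⋙ (G : A ⥤ A) ⟶ (G : A ⥤ A),
    G.δ ≫ e = 𝟙 (G : A ⥤ A) ∧
    e ≫ G.δ = whiskerLeft (G : A ⥤ A) G.δ ≫ whiskerRight e (G : A ⥤ A) ∧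
    whiskerRight G.δ (G : A ⥤ A) ≫ whiskerLeft (G : A ⥤ A) e = e ≫ G.δ

/-- Monad-side separability data: a natural section of the multiplication which is
a map of bimodules. -/
def MoData (T : Monad A) : Prop :=
  ∃ σ : (T : A ⥤ A) ⟶ (T : A ⥤ A) ⋙ (T : A ⥤ A),
    σ ≫ T.μ = 𝟙 (T : A ⥤ A) ∧
    T.μ ≫ σ = whiskerRight σ (T : A ⥤ A) ≫ whiskerLeft (T : A ⥤ A) T.μ ∧
    whiskerLeft (T : A ⥤ A) σ ≫ whiskerRight T.μ (T : A ⥤ A) = T.μ ≫ σ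

theorem moData_of_coData (G : Comonad A) (T : Monad A) (adj : (G : A ⥤ A) ⊣ (T : A ⥤ A))
    (hμ : T.μ = conjugateEquiv (adj.comp adj) adj G.δ) (h : CoData G) : MoData T := by
  obtain ⟨e, h1, h2, h3⟩ := h
  refine ⟨conjugateEquiv adj (adj.comp adj) e, ?_, ?_, ?_⟩
  · rw [hμ, conjugateEquiv_comp, h1, conjugateEquiv_id]
  · calc T.μ ≫ conjugateEquiv adj (adj.comp adj) e
        = conjugateEquiv (adj.comp adj) adj G.δ ≫ conjugateEquiv adj (adj.comp adj) e := by
          rw [← hμ]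
      _ = conjugateEquiv (adj.comp adj) (adj.comp adj) (e ≫ G.δ) :=
          conjugateEquiv_comp (adj.comp adj) adj (adj.comp adj) G.δ e
      _ = conjugateEquiv (adj.comp adj) (adj.comp adj)
            (whiskerRight G.δ (G : A ⥤ A) ≫ whiskerLeft (G : A ⥤ A) e) := by rw [h3]
      _ = conjugateEquiv (adj.comp adj) (adj.comp (adj.comp adj)) (whiskerLeft (G : A ⥤ A) e) ≫
            conjugateEquiv (adj.comp (adj.comp adj)) (adj.comp adj)
              (whiskerRight G.δ (G : A ⥤ A)) :=
          (conjugateEquiv_comp (adj.comp adj) (adj.comp (adj.comp adj)) (adj.comp adj)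
            (whiskerLeft (G : A ⥤ A) e) (whiskerRight G.δ (G : A ⥤ A))).symm
      _ = whiskerRight (conjugateEquiv adj (adj.comp adj) e) (T : A ⥤ A) ≫
            whiskerLeft (T : A ⥤ A) T.μ := by
          rw [conj_whiskerLeft_e adj e, conj_whiskerRight_d adj G.δ, ← hμ]
  · calc whiskerLeft (T : A ⥤ A) (conjugateEquiv adj (adj.comp adj) e) ≫
            whiskerRight T.μ (T : A ⥤ A)
        = conjugateEquiv (adj.comp adj) (adj.comp (adj.comp adj)) (whiskerRight e (G : A ⥤ A)) ≫
            conjugateEquiv (adj.comp (adj.comp adj)) (adj.comp adj)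
              (whiskerLeft (G : A ⥤ A) G.δ) := by
          rw [conj_whiskerRight_e adj e, conj_whiskerLeft_d adj G.δ, ← hμ]
      _ = conjugateEquiv (adj.comp adj) (adj.comp adj)
            (whiskerLeft (G : A ⥤ A) G.δ ≫ whiskerRight e (G : A ⥤ A)) :=
          conjugateEquiv_comp (adj.comp adj) (adj.comp (adj.comp adj)) (adj.comp adj)
            (whiskerRight e (G : A ⥤ A)) (whiskerLeft (G : A ⥤ A) G.δ)
      _ = conjugateEquiv (adj.comp adj) (adj.comp adj) (e ≫ G.δ) := by rw [← h2]
      _ = conjugateEquiv (adj.comp adj) adj G.δ ≫ conjugateEquiv adj (adj.comp adj) e :=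
          (conjugateEquiv_comp (adj.comp adj) adj (adj.comp adj) G.δ e).symm
      _ = T.μ ≫ conjugateEquiv adj (adj.comp adj) e := by rw [← hμ]

theorem coData_of_moData (G : Comonad A) (T : Monad A) (adj : (G : A ⥤ A) ⊣ (T : A ⥤ A))
    (hμ : T.μ = conjugateEquiv (adj.comp adj) adj G.δ) (h : MoData T) : CoData G := by
  obtain ⟨σ, h1, h2, h3⟩ := h
  set e := (conjugateEquiv adj (adj.comp adj)).symm σ with he
  have hσ : conjugateEquiv adj (adj.comp adj) e = σ :=
    (conjugateEquiv adj (adj.comp adj)).apply_symm_apply σ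
  refine ⟨e, ?_, ?_, ?_⟩
  · apply (conjugateEquiv adj adj).injective
    rw [conjugateEquiv_id, ← conjugateEquiv_comp adj (adj.comp adj) adj e G.δ, hσ, ← hμ, h1]
  · apply (conjugateEquiv (adj.comp adj) (adj.comp adj)).injective
    have l1 : conjugateEquiv (adj.comp adj) (adj.comp adj) (e ≫ G.δ) = T.μ ≫ σ := by
      rw [← conjugateEquiv_comp (adj.comp adj) adj (adj.comp adj) G.δ e, hσ, ← hμ]
    have l2 : conjugateEquiv (adj.comp adj) (adj.comp adj)
        (whiskerLeft (G : A ⥤ A) G.δ ≫ whiskerRight e (G : A ⥤ A)) = T.μ ≫ σ := by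
      rw [← conjugateEquiv_comp (adj.comp adj) (adj.comp (adj.comp adj)) (adj.comp adj)
        (whiskerRight e (G : A ⥤ A)) (whiskerLeft (G : A ⥤ A) G.δ),
        conj_whiskerRight_e adj e, conj_whiskerLeft_d adj G.δ, hσ, ← hμ, h3]
    rw [l1, l2]
  · apply (conjugateEquiv (adj.comp adj) (adj.comp adj)).injective
    have l1 : conjugateEquiv (adj.comp adj) (adj.comp adj) (e ≫ G.δ) = T.μ ≫ σ := by
      rw [← conjugateEquiv_comp (adj.comp adj) adj (adj.comp adj) G.δ e, hσ, ← hμ]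
    have l2 : conjugateEquiv (adj.comp adj) (adj.comp adj)
        (whiskerRight G.δ (G : A ⥤ A) ≫ whiskerLeft (G : A ⥤ A) e) = T.μ ≫ σ := by
      rw [← conjugateEquiv_comp (adj.comp adj) (adj.comp (adj.comp adj)) (adj.comp adj)
        (whiskerLeft (G : A ⥤ A) e) (whiskerRight G.δ (G : A ⥤ A)),
        conj_whiskerLeft_e adj e, conj_whiskerRight_d adj G.δ, hσ, ← hμ, h2]
    rw [l1, l2]

end Data

section Comonad

variable {A : Type*} [Category A]

theorem coData_of_sep (G : Comonad A) (h : SeparableFunctor G.forget) : CoData G := by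
  obtain ⟨ζ, hζ1, hζ2⟩ := h
  have εnat : ∀ {P Q : A} (q : P ⟶ Q), (G : A ⥤ A).map q ≫ G.ε.app Q = G.ε.app P ≫ q := by
    intro P Q q; simpa using G.ε.naturality q
  -- the components of the idempotent
  have nat : ∀ {X Y : A} (f : X ⟶ Y),
      (G : A ⥤ A).map ((G : A ⥤ A).map f) ≫
          (ζ (G.cofree.obj ((G : A ⥤ A).obj Y)) (G.cofree.obj Y)
            (G.ε.app ((G : A ⥤ A).obj Y))).f =
        (ζ (G.cofree.obj ((G : A ⥤ A).obj X)) (G.cofree.obj X)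
            (G.ε.app ((G : A ⥤ A).obj X))).f ≫ (G : A ⥤ A).map f := by
    intro X Y f
    have h1 := hζ2 (G.cofree.obj ((G : A ⥤ A).obj X)) (G.cofree.obj ((G : A ⥤ A).obj Y))
      (G.cofree.obj Y) (G.cofree.obj Y) (G.cofree.map ((G : A ⥤ A).map f))
      (𝟙 (G.cofree.obj Y)) (G.ε.app ((G : A ⥤ A).obj Y))
    have h2 := hζ2 (G.cofree.obj ((G : A ⥤ A).obj X)) (G.cofree.obj ((G : A ⥤ A).obj X))
      (G.cofree.obj X) (G.cofree.obj Y) (𝟙 (G.cofree.obj ((G : A ⥤ A).obj X)))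
      (G.cofree.map f) (G.ε.app ((G : A ⥤ A).obj X))
    simp only [Comonad.forget_map, Comonad.forget_obj, Functor.id_obj, Comonad.cofree_map_f, Comonad.Coalgebra.id_f, Comonad.cofree_obj_A,
      CategoryTheory.Functor.map_id, Category.comp_id, Category.id_comp] at h1 h2
    erw [Category.comp_id, εnat ((G : A ⥤ A).map f)] at h1
    erw [Category.id_comp] at h2
    erw [h2] at h1
    have := congrArg Comonad.Coalgebra.Hom.f h1
    have hh := this.symm
    simp [Comonad.Coalgebra.comp_f, Comonad.cofree_map_f] at hh
    exact hh
  refine ⟨⟨fun X =>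
      (ζ (G.cofree.obj ((G : A ⥤ A).obj X)) (G.cofree.obj X)
        (G.ε.app ((G : A ⥤ A).obj X))).f,
    fun X Y f => by exact nat f⟩, ?_, ?_, ?_⟩
  · ext X
    have h3 := hζ2 (G.cofree.obj X) (G.cofree.obj ((G : A ⥤ A).obj X)) (G.cofree.obj X)
      (G.cofree.obj X)
      ({ f := G.δ.app X, h := G.coassoc X } :
        G.cofree.obj X ⟶ G.cofree.obj ((G : A ⥤ A).obj X))
      (𝟙 (G.cofree.obj X)) (G.ε.app ((G : A ⥤ A).obj X))
    simp only [Comonad.forget_map, Comonad.forget_obj, Functor.id_obj, Comonad.Coalgebra.id_f, Comonad.cofree_obj_A, CategoryTheory.Functor.map_id,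
      Category.comp_id, Category.id_comp] at h3
    erw [Category.comp_id, G.left_counit] at h3
    rw [show (𝟙 (G.obj X) : G.obj X ⟶ G.obj X) = G.forget.map (𝟙 (G.cofree.obj X)) by simp; rfl,
      hζ1] at h3
    have := congrArg Comonad.Coalgebra.Hom.f h3
    have hh := this.symm
    simp [Comonad.Coalgebra.comp_f] at hh
    exact hh
  · ext X
    exact (ζ (G.cofree.obj ((G : A ⥤ A).obj X)) (G.cofree.obj X)
      (G.ε.app ((G : A ⥤ A).obj X))).h.symm
  · ext X
    have h4 := hζ2 (G.cofree.obj ((G : A ⥤ A).obj X))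
      (G.cofree.obj ((G : A ⥤ A).obj ((G : A ⥤ A).obj X)))
      (G.cofree.obj ((G : A ⥤ A).obj X)) (G.cofree.obj ((G : A ⥤ A).obj X))
      (G.cofree.map (G.δ.app X)) (𝟙 (G.cofree.obj ((G : A ⥤ A).obj X)))
      (G.ε.app ((G : A ⥤ A).obj ((G : A ⥤ A).obj X)))
    have h5 := hζ2 (G.cofree.obj ((G : A ⥤ A).obj X)) (G.cofree.obj ((G : A ⥤ A).obj X))
      (G.cofree.obj X) (G.cofree.obj ((G : A ⥤ A).obj X))
      (𝟙 (G.cofree.obj ((G : A ⥤ A).obj X)))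
      ({ f := G.δ.app X, h := G.coassoc X } :
        G.cofree.obj X ⟶ G.cofree.obj ((G : A ⥤ A).obj X))
      (G.ε.app ((G : A ⥤ A).obj X))
    simp only [Comonad.forget_map, Comonad.forget_obj, Functor.id_obj, Comonad.cofree_map_f, Comonad.Coalgebra.id_f, Comonad.cofree_obj_A,
      CategoryTheory.Functor.map_id, Category.comp_id, Category.id_comp] at h4 h5
    have ε4 : (G : A ⥤ A).map (G.δ.app X) ≫ G.ε.app ((G : A ⥤ A).obj ((G : A ⥤ A).obj X))
        = G.ε.app ((G : A ⥤ A).obj X) ≫ G.δ.app X := εnat (G.δ.app X)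
    erw [Category.comp_id, ε4] at h4
    erw [Category.id_comp] at h5
    erw [h5] at h4
    have := congrArg Comonad.Coalgebra.Hom.f h4
    have hh := this.symm
    simp [Comonad.Coalgebra.comp_f, Comonad.cofree_map_f] at hh
    exact hh

theorem sep_of_coData (G : Comonad A) (h : CoData G) : SeparableFunctor G.forget := by
  obtain ⟨e, h1, h2, h3⟩ := h
  have c1 : ∀ X : A, G.δ.app X ≫ e.app X = 𝟙 (G.obj X) := fun X => congr_app h1 X
  have c2 : ∀ X : A, e.app X ≫ G.δ.app X
      = G.δ.app ((G : A ⥤ A).obj X) ≫ (G : A ⥤ A).map (e.app X) := by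
    intro X; simpa using congr_app h2 X
  have c3 : ∀ X : A, (G : A ⥤ A).map (G.δ.app X) ≫ e.app ((G : A ⥤ A).obj X)
      = e.app X ≫ G.δ.app X := by
    intro X; simpa using congr_app h3 X
  have enat : ∀ {P Q : A} (q : P ⟶ Q),
      (G : A ⥤ A).map ((G : A ⥤ A).map q) ≫ e.app Q = e.app P ≫ (G : A ⥤ A).map q := by
    intro P Q q; simpa using e.naturality q
  have δnat : ∀ {P Q : A} (q : P ⟶ Q),
      G.δ.app P ≫ (G : A ⥤ A).map ((G : A ⥤ A).map q) = (G : A ⥤ A).map q ≫ G.δ.app Q := by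
    intro P Q q; simpa using (G.δ.naturality q).symm
  have εnat : ∀ {P Q : A} (q : P ⟶ Q), (G : A ⥤ A).map q ≫ G.ε.app Q = G.ε.app P ≫ q := by
    intro P Q q; simpa using G.ε.naturality q
  have cA1 : ∀ Z : A, (G : A ⥤ A).map (G.δ.app Z) ≫ e.app ((G : A ⥤ A).obj Z) ≫
      G.ε.app ((G : A ⥤ A).obj Z) = e.app Z := by
    intro Z; rw [← Category.assoc, c3, Category.assoc, G.left_counit, Category.comp_id]
  have cA2 : ∀ Z : A, G.δ.app ((G : A ⥤ A).obj Z) ≫ (G : A ⥤ A).map (e.app Z) ≫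
      (G : A ⥤ A).map (G.ε.app Z) = e.app Z := by
    intro Z; rw [← Category.assoc, ← c2, Category.assoc, G.right_counit, Category.comp_id]
  have hom : ∀ (M N : G.Coalgebra) (p : M.A ⟶ N.A),
      M.a ≫ (G : A ⥤ A).map
          (M.a ≫ (G : A ⥤ A).map p ≫ (G : A ⥤ A).map N.a ≫ e.app N.A ≫ G.ε.app N.A)
        = (M.a ≫ (G : A ⥤ A).map p ≫ (G : A ⥤ A).map N.a ≫ e.app N.A ≫ G.ε.app N.A) ≫ N.a := by
    intro M N p
    simp only [Functor.map_comp, Category.assoc]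
    rw [← reassoc_of% M.coassoc, reassoc_of% (δnat p), reassoc_of% (δnat N.a), cA2 N.A]
    rw [← εnat N.a]
    rw [← reassoc_of% (enat N.a)]
    have gco : (G : A ⥤ A).map N.a ≫ (G : A ⥤ A).map (G.δ.app N.A)
        = (G : A ⥤ A).map N.a ≫ (G : A ⥤ A).map ((G : A ⥤ A).map N.a) := by
      rw [← Functor.map_comp, ← Functor.map_comp, N.coassoc]
    rw [← reassoc_of% gco, cA1 N.A]
  refine ⟨fun M N p =>
    { f := M.a ≫ (G : A ⥤ A).map p ≫ (G : A ⥤ A).map N.a ≫ e.app N.A ≫ G.ε.app N.A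
      h := hom M N p }, ?_, ?_⟩
  · intro M N f
    apply Comonad.Coalgebra.Hom.ext' _ _ _ _ _
    simp only [Comonad.forget_map]
    erw [reassoc_of% f.h, ← reassoc_of% N.coassoc, reassoc_of% (c1 N.A), N.counit,
      Category.comp_id]
  · intro M' M N N' g hh p
    apply Comonad.Coalgebra.Hom.ext' _ _ _ _ _
    simp only [Comonad.forget_map, Comonad.Coalgebra.comp_f, Functor.map_comp, Category.assoc]
    erw [Functor.map_comp, Functor.map_comp]
    simp only [Category.assoc]
    erw [reassoc_of% g.h]
    have hhh : (G : A ⥤ A).map hh.f ≫ (G : A ⥤ A).map N'.a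
        = (G : A ⥤ A).map N.a ≫ (G : A ⥤ A).map ((G : A ⥤ A).map hh.f) := by
      rw [← Functor.map_comp, ← Functor.map_comp, hh.h]
    erw [reassoc_of% hhh, reassoc_of% (enat hh.f), εnat hh.f]
    rfl

end Comonad

section Monad

variable {A : Type*} [Category A]

theorem moData_of_sep (T : Monad A) (h : SeparableFunctor T.forget) : MoData T := by
  obtain ⟨ζ, hζ1, hζ2⟩ := h
  have ηnat : ∀ {P Q : A} (q : P ⟶ Q), q ≫ T.η.app Q = T.η.app P ≫ (T : A ⥤ A).map q := by
    intro P Q q; simpa using T.η.naturality q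
  have nat : ∀ {X Y : A} (f : X ⟶ Y),
      (T : A ⥤ A).map f ≫
          (ζ (T.free.obj Y) (T.free.obj ((T : A ⥤ A).obj Y))
            (T.η.app ((T : A ⥤ A).obj Y))).f =
        (ζ (T.free.obj X) (T.free.obj ((T : A ⥤ A).obj X))
            (T.η.app ((T : A ⥤ A).obj X))).f ≫ (T : A ⥤ A).map ((T : A ⥤ A).map f) := by
    intro X Y f
    have h1 := hζ2 (T.free.obj X) (T.free.obj Y) (T.free.obj ((T : A ⥤ A).obj Y))
      (T.free.obj ((T : A ⥤ A).obj Y)) (T.free.map f) (𝟙 (T.free.obj ((T : A ⥤ A).obj Y)))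
      (T.η.app ((T : A ⥤ A).obj Y))
    have h2 := hζ2 (T.free.obj X) (T.free.obj X) (T.free.obj ((T : A ⥤ A).obj X))
      (T.free.obj ((T : A ⥤ A).obj Y)) (𝟙 (T.free.obj X))
      (T.free.map ((T : A ⥤ A).map f)) (T.η.app ((T : A ⥤ A).obj X))
    simp only [Monad.forget_map, Monad.forget_obj, Functor.id_obj, Monad.free_map_f,
      Monad.Algebra.id_f, Monad.free_obj_A, CategoryTheory.Functor.map_id,
      Category.comp_id, Category.id_comp] at h1 h2
    have ηf : (T : A ⥤ A).map f ≫ T.η.app ((T : A ⥤ A).obj Y)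
        = T.η.app ((T : A ⥤ A).obj X) ≫ (T : A ⥤ A).map ((T : A ⥤ A).map f) :=
      ηnat ((T : A ⥤ A).map f)
    erw [Category.comp_id, ηf] at h1
    erw [Category.id_comp] at h2
    erw [h2] at h1
    have := congrArg Monad.Algebra.Hom.f h1
    have hh := this.symm
    simp [Monad.Algebra.comp_f, Monad.free_map_f] at hh
    exact hh
  refine ⟨⟨fun X =>
      (ζ (T.free.obj X) (T.free.obj ((T : A ⥤ A).obj X))
        (T.η.app ((T : A ⥤ A).obj X))).f,
    fun X Y f => by exact nat f⟩, ?_, ?_, ?_⟩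
  · ext X
    have h3 := hζ2 (T.free.obj X) (T.free.obj X) (T.free.obj ((T : A ⥤ A).obj X))
      (T.free.obj X) (𝟙 (T.free.obj X))
      ({ f := T.μ.app X, h := T.assoc X } :
        T.free.obj ((T : A ⥤ A).obj X) ⟶ T.free.obj X)
      (T.η.app ((T : A ⥤ A).obj X))
    simp only [Monad.forget_map, Monad.forget_obj, Functor.id_obj, Monad.Algebra.id_f,
      Monad.free_obj_A, CategoryTheory.Functor.map_id, Category.comp_id,
      Category.id_comp] at h3
    erw [Category.id_comp, T.left_unit] at h3
    simp only [Functor.id_obj] at h3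
    rw [show (𝟙 (T.obj X) : T.obj X ⟶ T.obj X) = T.forget.map (𝟙 (T.free.obj X)) by simp; rfl,
      hζ1] at h3
    have := congrArg Monad.Algebra.Hom.f h3
    have hh := this.symm
    simp [Monad.Algebra.comp_f] at hh
    exact hh
  · ext X
    exact (ζ (T.free.obj X) (T.free.obj ((T : A ⥤ A).obj X))
      (T.η.app ((T : A ⥤ A).obj X))).h.symm
  · ext X
    have h4 := hζ2 (T.free.obj ((T : A ⥤ A).obj X)) (T.free.obj ((T : A ⥤ A).obj X))
      (T.free.obj ((T : A ⥤ A).obj ((T : A ⥤ A).obj X))) (T.free.obj ((T : A ⥤ A).obj X))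
      (𝟙 (T.free.obj ((T : A ⥤ A).obj X))) (T.free.map (T.μ.app X))
      (T.η.app ((T : A ⥤ A).obj ((T : A ⥤ A).obj X)))
    have h5 := hζ2 (T.free.obj ((T : A ⥤ A).obj X)) (T.free.obj X)
      (T.free.obj ((T : A ⥤ A).obj X)) (T.free.obj ((T : A ⥤ A).obj X))
      ({ f := T.μ.app X, h := T.assoc X } :
        T.free.obj ((T : A ⥤ A).obj X) ⟶ T.free.obj X)
      (𝟙 (T.free.obj ((T : A ⥤ A).obj X))) (T.η.app ((T : A ⥤ A).obj X))
    simp only [Monad.forget_map, Monad.forget_obj, Functor.id_obj, Monad.free_map_f,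
      Monad.Algebra.id_f, Monad.free_obj_A, CategoryTheory.Functor.map_id,
      Category.comp_id, Category.id_comp] at h4 h5
    have η4 : T.η.app ((T : A ⥤ A).obj ((T : A ⥤ A).obj X)) ≫ (T : A ⥤ A).map (T.μ.app X)
        = T.μ.app X ≫ T.η.app ((T : A ⥤ A).obj X) := (ηnat (T.μ.app X)).symm
    erw [Category.id_comp, η4] at h4
    erw [Category.comp_id] at h5
    erw [h5] at h4
    have := congrArg Monad.Algebra.Hom.f h4
    have hh := this.symm
    simp [Monad.Algebra.comp_f, Monad.free_map_f] at hh
    exact hh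

theorem sep_of_moData (T : Monad A) (h : MoData T) : SeparableFunctor T.forget := by
  obtain ⟨σ, h1, h2, h3⟩ := h
  have c1 : ∀ X : A, σ.app X ≫ T.μ.app X = 𝟙 (T.obj X) := by
    intro X; simpa using congr_app h1 X
  have c2 : ∀ X : A, T.μ.app X ≫ σ.app X
      = (T : A ⥤ A).map (σ.app X) ≫ T.μ.app ((T : A ⥤ A).obj X) := by
    intro X; simpa using congr_app h2 X
  have c3 : ∀ X : A, σ.app ((T : A ⥤ A).obj X) ≫ (T : A ⥤ A).map (T.μ.app X)
      = T.μ.app X ≫ σ.app X := by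
    intro X; simpa using congr_app h3 X
  have σnat : ∀ {P Q : A} (q : P ⟶ Q),
      (T : A ⥤ A).map q ≫ σ.app Q = σ.app P ≫ (T : A ⥤ A).map ((T : A ⥤ A).map q) := by
    intro P Q q; simpa using σ.naturality q
  have μnat : ∀ {P Q : A} (q : P ⟶ Q),
      (T : A ⥤ A).map ((T : A ⥤ A).map q) ≫ T.μ.app Q = T.μ.app P ≫ (T : A ⥤ A).map q := by
    intro P Q q; simpa using T.μ.naturality q
  have ηnat : ∀ {P Q : A} (q : P ⟶ Q), q ≫ T.η.app Q = T.η.app P ≫ (T : A ⥤ A).map q := by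
    intro P Q q; simpa using T.η.naturality q
  have hom : ∀ (M N : T.Algebra) (p : M.A ⟶ N.A),
      (T : A ⥤ A).map
          (T.η.app M.A ≫ σ.app M.A ≫ (T : A ⥤ A).map M.a ≫ (T : A ⥤ A).map p ≫ N.a) ≫ N.a
        = M.a ≫ (T.η.app M.A ≫ σ.app M.A ≫ (T : A ⥤ A).map M.a ≫ (T : A ⥤ A).map p ≫ N.a) := by
    intro M N p
    have L : (T : A ⥤ A).map
          (T.η.app M.A ≫ σ.app M.A ≫ (T : A ⥤ A).map M.a ≫ (T : A ⥤ A).map p ≫ N.a) ≫ N.a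
        = σ.app M.A ≫ (T : A ⥤ A).map M.a ≫ (T : A ⥤ A).map p ≫ N.a := by
      simp only [Functor.map_comp, Category.assoc]
      rw [← N.assoc, reassoc_of% (μnat p), reassoc_of% (μnat M.a),
        ← reassoc_of% (c2 M.A), reassoc_of% (T.right_unit M.A)]
    have R : M.a ≫
          (T.η.app M.A ≫ σ.app M.A ≫ (T : A ⥤ A).map M.a ≫ (T : A ⥤ A).map p ≫ N.a)
        = σ.app M.A ≫ (T : A ⥤ A).map M.a ≫ (T : A ⥤ A).map p ≫ N.a := by
      rw [reassoc_of% (ηnat M.a), reassoc_of% (σnat M.a)]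
      have tta : (T : A ⥤ A).map ((T : A ⥤ A).map M.a) ≫ (T : A ⥤ A).map M.a
          = (T : A ⥤ A).map (T.μ.app M.A) ≫ (T : A ⥤ A).map M.a := by
        rw [← Functor.map_comp, ← Functor.map_comp, M.assoc]
      rw [reassoc_of% tta, reassoc_of% (c3 M.A), reassoc_of% (T.left_unit M.A)]
    exact L.trans R.symm
  refine ⟨fun M N p =>
    { f := T.η.app M.A ≫ σ.app M.A ≫ (T : A ⥤ A).map M.a ≫ (T : A ⥤ A).map p ≫ N.a
      h := hom M N p }, ?_, ?_⟩
  · intro M N f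
    apply Monad.Algebra.Hom.ext' _ _ _ _ _
    simp only [Monad.forget_map]
    erw [f.h, ← reassoc_of% M.assoc, reassoc_of% (c1 M.A), reassoc_of% M.unit]
  · intro M' M N N' g hh p
    apply Monad.Algebra.Hom.ext' _ _ _ _ _
    simp only [Monad.forget_map, Monad.Algebra.comp_f, Functor.map_comp, Category.assoc]
    erw [Functor.map_comp, Functor.map_comp]
    repeat erw [Category.assoc]
    have tg : (T : A ⥤ A).map M'.a ≫ (T : A ⥤ A).map g.f
        = (T : A ⥤ A).map ((T : A ⥤ A).map g.f) ≫ (T : A ⥤ A).map M.a := by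
      rw [← Functor.map_comp, ← Functor.map_comp, g.h]
    erw [reassoc_of% tg, ← reassoc_of% (σnat g.f), ← reassoc_of% (ηnat g.f), hh.h]
    rfl

end Monad

end ForgetSepAux

/-- Let `G` be a comonad on `A` whose underlying endofunctor is left adjoint to the underlying
endofunctor of a monad `T`, the monad structure of `T` being the mate of the comonad structure
of `G`.  Then the forgetful functor from `G`-comodules is separable iff the forgetful functor
from `T`-modules is separable; and in that case every `G`-comodule is relative injective and
every `T`-module is relative projective with respect to the forgetful functors. -/
theorem forget_separable_iff_and_rel_inj_proj {A : Type*} [Category A]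
    (G : Comonad A) (T : Monad A) (adj : (G : A ⥤ A) ⊣ (T : A ⥤ A))
    (hμ : T.μ = conjugateEquiv (adj.comp adj) adj G.δ)
    (hη : T.η = conjugateEquiv Adjunction.id adj G.ε) :
    (SeparableFunctor G.forget ↔ SeparableFunctor T.forget) ∧
    (SeparableFunctor G.forget →
      (∀ M : G.Coalgebra, RelInjective G.forget M) ∧
      (∀ N : T.Algebra, RelProjective T.forget N)) := by
  have fwd : SeparableFunctor G.forget → SeparableFunctor T.forget := fun h =>
    ForgetSepAux.sep_of_moData T
      (ForgetSepAux.moData_of_coData G T adj hμ (ForgetSepAux.coData_of_sep G h))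
  have bwd : SeparableFunctor T.forget → SeparableFunctor G.forget := fun h =>
    ForgetSepAux.sep_of_coData G
      (ForgetSepAux.coData_of_moData G T adj hμ (ForgetSepAux.moData_of_sep T h))
  refine ⟨⟨fwd, bwd⟩, fun h => ⟨fun M => ForgetSepAux.relInjective_of_separable h M,
    fun N => ForgetSepAux.relProjective_of_separable (fwd h) N⟩⟩
end

section
/- Let (L,R) be an adjoint pair of endofunctors on a category A with unit η and counit ε, with L a comonad and R the right adjoint monad, and let φ^L : A → A^L and φ_R : A → A_R denote the cofree and free functors. Then φ^L is separable if and only if φ_R is separable. Explicitly, the counit e of L has a natural section if and only if the unit i of R has a natural retraction, where e = ε ∘ Li and i = Re ∘ η are mates. -/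
open CategoryTheory

/-- Rafael's theorem for the cofree functor of a comonad: it is separable iff the counit
has a natural section. -/
theorem comonad_cofree_separable_iff {A : Type*} [Category A] (G : Comonad A) :
    SeparableFunctor G.cofree ↔ ∃ s : 𝟭 A ⟶ (G : A ⥤ A), s ≫ G.ε = 𝟙 (𝟭 A) := by
  constructor
  · rintro ⟨ζ, hζ1, hζ2⟩
    -- δ_X is a coalgebra morphism `cofree X ⟶ cofree (G X)`
    refine ⟨⟨fun X => ζ X ((G : A ⥤ A).obj X)
      ⟨G.δ.app X, G.coassoc X⟩, ?_⟩, ?_⟩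
    · intro X Y f
      dsimp only [Functor.id_map]
      have h1 : f ≫ ζ Y ((G : A ⥤ A).obj Y) ⟨G.δ.app Y, G.coassoc Y⟩ =
          ζ X ((G : A ⥤ A).obj Y)
            (G.cofree.map f ≫ (⟨G.δ.app Y, G.coassoc Y⟩ : G.cofree.obj Y ⟶
              G.cofree.obj ((G : A ⥤ A).obj Y)) ≫ G.cofree.map (𝟙 _)) := by
        rw [hζ2 X Y ((G : A ⥤ A).obj Y) ((G : A ⥤ A).obj Y) f (𝟙 _)]
        simp
      have h2 : ζ X ((G : A ⥤ A).obj X) ⟨G.δ.app X, G.coassoc X⟩ ≫ (G : A ⥤ A).map f =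
          ζ X ((G : A ⥤ A).obj Y)
            (G.cofree.map (𝟙 X) ≫ (⟨G.δ.app X, G.coassoc X⟩ : G.cofree.obj X ⟶
              G.cofree.obj ((G : A ⥤ A).obj X)) ≫ G.cofree.map ((G : A ⥤ A).map f)) := by
        rw [hζ2 X X ((G : A ⥤ A).obj X) ((G : A ⥤ A).obj Y) (𝟙 X) ((G : A ⥤ A).map f)]
        simp
      rw [h1, h2]
      congr 1
      apply Comonad.Coalgebra.Hom.ext
      have := G.δ.naturality f
      simp only [Comonad.cofree_obj_A, Comonad.Coalgebra.comp_f, Comonad.cofree_map_f]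
      rw [G.map_id, G.map_id]; erw [Category.comp_id, Category.id_comp]; exact this
    · ext X
      have : (⟨G.δ.app X, G.coassoc X⟩ : G.cofree.obj X ⟶ G.cofree.obj ((G : A ⥤ A).obj X))
          ≫ G.cofree.map (G.ε.app X) = 𝟙 (G.cofree.obj X) := by
        apply Comonad.Coalgebra.Hom.ext
        simp [G.right_counit X]
        exact G.right_counit X
      have h := hζ2 X X ((G : A ⥤ A).obj X) X (𝟙 X)
        (G.ε.app X) ⟨G.δ.app X, G.coassoc X⟩
      simp only [G.cofree.map_id, Category.id_comp] at h
      rw [this] at h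
      have h' : ζ X X (G.cofree.map (𝟙 X)) = 𝟙 X := by rw [hζ1]
      simp only [G.cofree.map_id] at h'
      simpa [h'] using h.symm
  · rintro ⟨s, hs⟩
    refine ⟨fun X Y p => s.app X ≫ p.f ≫ G.ε.app Y, fun X Y f => ?_, fun X' X Y Y' g h p => ?_⟩
    · have hsX := congrArg (fun t => NatTrans.app t X) hs
      simp only [NatTrans.comp_app, NatTrans.id_app, Functor.id_obj] at hsX
      have := s.naturality f
      simp only [Functor.id_map] at this
      calc s.app X ≫ (G.cofree.map f).f ≫ G.ε.app Y
          = s.app X ≫ (G : A ⥤ A).map f ≫ G.ε.app Y := rfl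
        _ = (s.app X ≫ (G : A ⥤ A).map f) ≫ G.ε.app Y := by rw [Category.assoc]
        _ = (f ≫ s.app Y) ≫ G.ε.app Y := by rw [← this]
        _ = f ≫ s.app Y ≫ G.ε.app Y := by rw [Category.assoc]
        _ = f := by
            have hsY := congrArg (fun t => NatTrans.app t Y) hs
            simp only [NatTrans.comp_app, NatTrans.id_app, Functor.id_obj] at hsY
            rw [hsY, Category.comp_id]
    · have hsg := s.naturality g
      simp only [Functor.id_map] at hsg
      have hεh := G.ε.naturality h
      simp only [Functor.id_map] at hεh
      calc s.app X' ≫ ((G.cofree.map g).f ≫ p.f ≫ (G.cofree.map h).f) ≫ G.ε.app Y'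
          = s.app X' ≫ (G : A ⥤ A).map g ≫ p.f ≫ (G : A ⥤ A).map h ≫ G.ε.app Y' := by
            simp [Comonad.cofree_map_f]
            exact congrArg (s.app X' ≫ ·) (Category.assoc _ _ _ |>.trans (congrArg (_ ≫ ·) (Category.assoc _ _ _)))
        _ = (s.app X' ≫ (G : A ⥤ A).map g) ≫ p.f ≫ (G : A ⥤ A).map h ≫ G.ε.app Y' := by
            rw [Category.assoc]
        _ = (g ≫ s.app X) ≫ p.f ≫ G.ε.app Y ≫ h := by rw [← hsg]; erw [hεh]; rfl
        _ = g ≫ (s.app X ≫ p.f ≫ G.ε.app Y) ≫ h := by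
            simp; exact congrArg (g ≫ ·) (congrArg (s.app X ≫ ·) (Category.assoc _ _ _).symm)

/-- Rafael's theorem for the free functor of a monad: it is separable iff the unit has a
natural retraction. -/
theorem monad_free_separable_iff {A : Type*} [Category A] (T : Monad A) :
    SeparableFunctor T.free ↔ ∃ r : (T : A ⥤ A) ⟶ 𝟭 A, T.η ≫ r = 𝟙 (𝟭 A) := by
  constructor
  · rintro ⟨ζ, hζ1, hζ2⟩
    -- μ_X is an algebra morphism `free (T X) ⟶ free X`
    refine ⟨⟨fun X => ζ ((T : A ⥤ A).obj X) X
      ⟨T.μ.app X, T.assoc X⟩, ?_⟩, ?_⟩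
    · intro X Y f
      dsimp only [Functor.id_map]
      have h1 : ζ ((T : A ⥤ A).obj X) X ⟨T.μ.app X, T.assoc X⟩ ≫ f =
          ζ ((T : A ⥤ A).obj X) Y
            (T.free.map (𝟙 _) ≫ (⟨T.μ.app X, T.assoc X⟩ : T.free.obj ((T : A ⥤ A).obj X) ⟶
              T.free.obj X) ≫ T.free.map f) := by
        rw [hζ2 ((T : A ⥤ A).obj X) ((T : A ⥤ A).obj X) X Y (𝟙 _) f]
        simp
      have h2 : (T : A ⥤ A).map f ≫ ζ ((T : A ⥤ A).obj Y) Y ⟨T.μ.app Y, T.assoc Y⟩ =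
          ζ ((T : A ⥤ A).obj X) Y
            (T.free.map ((T : A ⥤ A).map f) ≫ (⟨T.μ.app Y, T.assoc Y⟩ :
              T.free.obj ((T : A ⥤ A).obj Y) ⟶ T.free.obj Y) ≫ T.free.map (𝟙 Y)) := by
        rw [hζ2 ((T : A ⥤ A).obj X) ((T : A ⥤ A).obj Y) Y Y ((T : A ⥤ A).map f) (𝟙 Y)]
        simp
      rw [h1, h2]
      congr 1
      apply Monad.Algebra.Hom.ext
      have := T.μ.naturality f
      simp only [Monad.free_obj_A, Monad.Algebra.comp_f, Monad.free_map_f]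
      rw [T.map_id, T.map_id]; erw [Category.comp_id, Category.id_comp]; exact this
    · ext X
      have : (T.free.map (T.η.app X) ≫ ⟨T.μ.app X, T.assoc X⟩ :
          T.free.obj X ⟶ T.free.obj X) = 𝟙 (T.free.obj X) := by
        apply Monad.Algebra.Hom.ext
        simp [T.right_unit X]
        exact T.right_unit X
      have h := hζ2 X ((T : A ⥤ A).obj X) X X (T.η.app X) (𝟙 X)
        ⟨T.μ.app X, T.assoc X⟩
      simp only [T.free.map_id, Category.comp_id] at h
      rw [this] at h
      have h' : ζ X X (T.free.map (𝟙 X)) = 𝟙 X := by rw [hζ1]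
      simp only [T.free.map_id] at h'
      simpa [h'] using h.symm
  · rintro ⟨r, hr⟩
    refine ⟨fun X Y p => T.η.app X ≫ p.f ≫ r.app Y, fun X Y f => ?_, fun X' X Y Y' g h p => ?_⟩
    · have hη := T.η.naturality f
      simp only [Functor.id_map] at hη
      have hrY := congrArg (fun t => NatTrans.app t Y) hr
      simp only [NatTrans.comp_app, NatTrans.id_app, Functor.id_obj] at hrY
      calc T.η.app X ≫ (T.free.map f).f ≫ r.app Y
          = (T.η.app X ≫ (T : A ⥤ A).map f) ≫ r.app Y := by
            rw [Category.assoc]; rfl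
        _ = (f ≫ T.η.app Y) ≫ r.app Y := by rw [← hη]
        _ = f ≫ T.η.app Y ≫ r.app Y := by rw [Category.assoc]
        _ = f := by rw [hrY, Category.comp_id]
    · have hηg := T.η.naturality g
      simp only [Functor.id_map] at hηg
      have hrh := r.naturality h
      simp only [Functor.id_map] at hrh
      calc T.η.app X' ≫ ((T.free.map g).f ≫ p.f ≫ (T.free.map h).f) ≫ r.app Y'
          = (T.η.app X' ≫ (T : A ⥤ A).map g) ≫ p.f ≫ (T : A ⥤ A).map h ≫ r.app Y' := by
            simp [Monad.free_map_f]
            exact congrArg (T.η.app X' ≫ ·) (Category.assoc _ _ _ |>.trans (congrArg (_ ≫ ·) (Category.assoc _ _ _)))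
        _ = (g ≫ T.η.app X) ≫ p.f ≫ r.app Y ≫ h := by rw [← hηg]; erw [hrh]; rfl
        _ = g ≫ (T.η.app X ≫ p.f ≫ r.app Y) ≫ h := by
            simp; exact congrArg (g ≫ ·) (congrArg (T.η.app X ≫ ·) (Category.assoc _ _ _).symm)

/-- Let `(L,R)` be an adjoint pair of endofunctors of `A`, where `L` carries a comonad structure
`G` and `R` the mate monad structure `T` (so that the counit `e = G.ε` of `L` and the unit
`i = T.η` of `R` are mates: `i = Re ∘ η`).  Then the cofree functor `φ^L : A ⥤ A^L` is
separable iff the free functor `φ_R : A ⥤ A_R` is separable; explicitly, `e` has a natural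
section iff `i` has a natural retraction. -/
theorem cofree_separable_iff_free_separable {A : Type*} [Category A]
    (G : Comonad A) (T : Monad A) (adj : (G : A ⥤ A) ⊣ (T : A ⥤ A))
    (hμ : T.μ = conjugateEquiv (adj.comp adj) adj G.δ)
    (hη : T.η = conjugateEquiv Adjunction.id adj G.ε) :
    (SeparableFunctor G.cofree ↔ SeparableFunctor T.free) ∧
    ((∃ s : 𝟭 A ⟶ (G : A ⥤ A), s ≫ G.ε = 𝟙 (𝟭 A)) ↔
     (∃ r : (T : A ⥤ A) ⟶ 𝟭 A, T.η ≫ r = 𝟙 (𝟭 A))) := by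
  have key : (∃ s : 𝟭 A ⟶ (G : A ⥤ A), s ≫ G.ε = 𝟙 (𝟭 A)) ↔
      (∃ r : (T : A ⥤ A) ⟶ 𝟭 A, T.η ≫ r = 𝟙 (𝟭 A)) := by
    constructor
    · rintro ⟨s, hs⟩
      refine ⟨conjugateEquiv adj Adjunction.id s, ?_⟩
      rw [hη, conjugateEquiv_comp, hs, conjugateEquiv_id]
    · rintro ⟨r, hr⟩
      refine ⟨(conjugateEquiv adj Adjunction.id).symm r, ?_⟩
      have : conjugateEquiv Adjunction.id Adjunction.id
          ((conjugateEquiv adj Adjunction.id).symm r ≫ G.ε) = 𝟙 (𝟭 A) := by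
        rw [← conjugateEquiv_comp Adjunction.id adj Adjunction.id G.ε
          ((conjugateEquiv adj Adjunction.id).symm r)]
        rw [← hη, Equiv.apply_symm_apply, hr]
      have h2 := congrArg (conjugateEquiv Adjunction.id Adjunction.id).symm this
      rwa [Equiv.symm_apply_apply, ← conjugateEquiv_id Adjunction.id,
        Equiv.symm_apply_apply] at h2
  exact ⟨(comonad_cofree_separable_iff G).trans (key.trans (monad_free_separable_iff T).symm),
    key⟩
end
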